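/- Let (I, ≤) be a nonempty index set and for each i ∈ I let f_i : [0,∞) → [0,1] be measurable. For m ≥ 0 and t > 0 define V_{m,t} := inf_{i ∈ I} (1/t)∫_m^{m+t} f_i(s) ds, and V_t := V_{0,t}. Then liminf_{t→∞} V_t ≥ sup_{t>0} inf_{m≥0} V_{m,t}. -/

import Mathlib

open MeasureTheory Filter

theorem stmt16 {I : Type*} [Nonempty I] [LE I]
    (f : I → ℝ → ℝ) (hf : ∀ i, Measurable (f i))
    (hf01 : ∀ i s, 0 ≤ s → f i s ∈ Set.Icc (0:ℝ) 1) :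
    sSup {x : ℝ | ∃ t > (0:ℝ),
        x = ⨅ m : {m : ℝ // 0 ≤ m}, ⨅ i : I, (1/t) * ∫ s in (m:ℝ)..(m+t), f i s}
      ≤ liminf (fun t : ℝ => ⨅ i : I, (1/t) * ∫ s in (0:ℝ)..t, f i s) atTop := by
  set v : ℝ → ℝ := fun T : ℝ => ⨅ i : I, (1/T) * ∫ s in (0:ℝ)..T, f i s with hv
  -- integrability on [a,b] for 0 ≤ a ≤ b
  have hint : ∀ (i : I) (a b : ℝ), 0 ≤ a → a ≤ b → IntervalIntegrable (f i) volume a b := by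
    intro i a b ha hab
    rw [intervalIntegrable_iff_integrableOn_Ioc_of_le hab]
    have hc : IntegrableOn (fun _ => (1:ℝ)) (Set.Ioc a b) volume :=
      (integrableOn_const_iff (C := (1:ℝ))).mpr (Or.inr measure_Ioc_lt_top)
    refine hc.mono' (hf i).aestronglyMeasurable ?_
    filter_upwards [ae_restrict_mem measurableSet_Ioc] with s hs
    have h01 := hf01 i s (le_trans ha hs.1.le)
    rw [Real.norm_eq_abs, abs_le]
    exact ⟨by linarith [h01.1], h01.2⟩
  -- for t > 0 and m ≥ 0, the window average lies in [0,1]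
  have hval : ∀ (t : ℝ), 0 < t → ∀ (i : I) (m : ℝ), 0 ≤ m →
      (1/t) * ∫ s in m..(m+t), f i s ∈ Set.Icc (0:ℝ) 1 := by
    intro t ht i m hm
    have hmt : m ≤ m + t := by linarith
    have hnn : 0 ≤ ∫ s in m..(m+t), f i s :=
      intervalIntegral.integral_nonneg hmt (fun s hs => (hf01 i s (le_trans hm hs.1)).1)
    have hle : (∫ s in m..(m+t), f i s) ≤ ∫ _ in m..(m+t), (1:ℝ) := by
      apply intervalIntegral.integral_mono_on hmt (hint i m (m+t) hm hmt)
        (intervalIntegrable_const)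
      exact fun s hs => (hf01 i s (le_trans hm hs.1)).2
    rw [intervalIntegral.integral_const, smul_eq_mul, mul_one] at hle
    constructor
    · positivity
    · rw [one_div]
      calc t⁻¹ * ∫ s in m..(m+t), f i s ≤ t⁻¹ * (m + t - m) :=
        mul_le_mul_of_nonneg_left hle (by positivity)
      _ = 1 := by field_simp; ring
  -- v is eventually bounded below by 0 and above by 1
  have hv0 : ∀ T : ℝ, 0 < T → 0 ≤ v T := by
    intro T hT
    exact le_ciInf fun i => (hval T hT i 0 le_rfl).1.trans_eq (by rw [zero_add])
  have hvbdd : ∀ T : ℝ, 0 < T →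
      BddBelow (Set.range fun i : I => (1/T) * ∫ s in (0:ℝ)..T, f i s) := by
    intro T hT
    refine ⟨0, ?_⟩
    rintro y ⟨i, rfl⟩
    exact (hval T hT i 0 le_rfl).1.trans_eq (by rw [zero_add])
  -- main bound: each element of the set is ≤ liminf
  have key : ∀ t : ℝ, 0 < t →
      (⨅ m : {m : ℝ // 0 ≤ m}, ⨅ i : I, (1/t) * ∫ s in (m:ℝ)..(m+t), f i s)
        ≤ liminf v atTop := by
    intro t ht
    set x : ℝ := ⨅ m : {m : ℝ // 0 ≤ m}, ⨅ i : I, (1/t) * ∫ s in (m:ℝ)..(m+t), f i s with hx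
    have hbddi : ∀ m : {m : ℝ // 0 ≤ m},
        BddBelow (Set.range fun i : I => (1/t) * ∫ s in (m:ℝ)..((m:ℝ)+t), f i s) := by
      intro m
      refine ⟨0, ?_⟩
      rintro y ⟨i, rfl⟩
      exact (hval t ht i m m.2).1
    have hbddm : BddBelow (Set.range fun m : {m : ℝ // 0 ≤ m} =>
        ⨅ i : I, (1/t) * ∫ s in (m:ℝ)..((m:ℝ)+t), f i s) := by
      refine ⟨0, ?_⟩
      rintro y ⟨m, rfl⟩
      exact le_ciInf fun i => (hval t ht i m m.2).1
    have hx0 : 0 ≤ x := le_ciInf fun m => le_ciInf fun i => (hval t ht i m m.2).1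
    -- x ≤ every window average
    have hwin : ∀ (i : I) (m : ℝ) (hm : 0 ≤ m), t * x ≤ ∫ s in m..(m+t), f i s := by
      intro i m hm
      have h1 : x ≤ (1/t) * ∫ s in m..(m+t), f i s :=
        (ciInf_le hbddm ⟨m, hm⟩).trans (ciInf_le (hbddi ⟨m, hm⟩) i)
      calc t * x ≤ t * ((1/t) * ∫ s in m..(m+t), f i s) :=
        mul_le_mul_of_nonneg_left h1 ht.le
      _ = ∫ s in m..(m+t), f i s := by field_simp
    -- eventual lower bound for v
    have hev : ∀ᶠ T in atTop, (1 - t/T) * x ≤ v T := by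
      filter_upwards [eventually_ge_atTop (max t 1)] with T hT
      have hTt : t ≤ T := le_trans (le_max_left _ _) hT
      have hT1 : (1:ℝ) ≤ T := le_trans (le_max_right _ _) hT
      have hTpos : 0 < T := lt_of_lt_of_le one_pos hT1
      refine le_ciInf fun i => ?_
      set n : ℕ := ⌊T / t⌋₊ with hn
      have hnt : (n : ℝ) * t ≤ T := by
        have := Nat.floor_le (by positivity : (0:ℝ) ≤ T / t)
        calc (n : ℝ) * t ≤ (T / t) * t := by nlinarith
        _ = T := by field_simp
      have hnt' : T - t ≤ (n : ℝ) * t := by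
        have h2 : T / t < (n : ℝ) + 1 := Nat.lt_floor_add_one (T / t)
        have h3 : T < ((n:ℝ) + 1) * t := by
          have := mul_lt_mul_of_pos_right h2 ht
          rwa [div_mul_cancel₀ _ ht.ne'] at this
        nlinarith
      -- split integral
      have hia : ∀ k : ℕ, k < n → IntervalIntegrable (f i) volume (k * t) ((k+1) * t) := by
        intro k _
        refine hint i _ _ (by positivity) ?_
        have : (k : ℝ) ≤ (k : ℝ) + 1 := by linarith
        nlinarith
      have hsum : ∑ k ∈ Finset.range n, ∫ s in ((k:ℝ) * t)..(((k:ℝ)+1) * t), f i s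
          = ∫ s in ((0:ℕ) * t : ℝ)..((n:ℝ) * t), f i s := by
        have := intervalIntegral.sum_integral_adjacent_intervals
          (a := fun k : ℕ => (k : ℝ) * t) (μ := volume) (f := f i) (n := n) ?_
        · convert this using 2 <;> push_cast <;> ring_nf
        · intro k hk
          have := hia k hk
          convert this using 2
          push_cast; ring
      have hlow : ∀ k ∈ Finset.range n, t * x ≤ ∫ s in ((k:ℝ) * t)..(((k:ℝ)+1) * t), f i s := by
        intro k _
        have := hwin i ((k:ℝ) * t) (by positivity)
        convert this using 2
        ring
      have hsumlow : (n : ℝ) * (t * x) ≤ ∫ s in ((0:ℝ))..((n:ℝ) * t), f i s := by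
        have h1 : ∑ k ∈ Finset.range n, (t * x)
            ≤ ∑ k ∈ Finset.range n, ∫ s in ((k:ℝ) * t)..(((k:ℝ)+1) * t), f i s :=
          Finset.sum_le_sum hlow
        rw [Finset.sum_const, Finset.card_range, nsmul_eq_mul] at h1
        rw [hsum] at h1
        simpa using h1
      have htail : 0 ≤ ∫ s in ((n:ℝ) * t)..T, f i s :=
        intervalIntegral.integral_nonneg hnt
          (fun s hs => (hf01 i s (le_trans (by positivity) hs.1)).1)
      have hsplit : (∫ s in ((0:ℝ))..((n:ℝ)*t), f i s) + ∫ s in ((n:ℝ)*t)..T, f i s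
          = ∫ s in (0:ℝ)..T, f i s :=
        intervalIntegral.integral_add_adjacent_intervals
          (hint i 0 _ le_rfl (by positivity)) (hint i _ T (by positivity) hnt)
      have hItot : (T - t) * x ≤ ∫ s in (0:ℝ)..T, f i s := by
        have : (T - t) * x ≤ (n:ℝ) * (t * x) := by nlinarith
        linarith [hsumlow, htail, hsplit, this]
      calc (1 - t/T) * x = (1/T) * ((T - t) * x) := by field_simp
      _ ≤ (1/T) * ∫ s in (0:ℝ)..T, f i s :=
        mul_le_mul_of_nonneg_left hItot (by positivity)
    -- pass to liminf
    have hu : Tendsto (fun T : ℝ => (1 - t/T) * x) atTop (nhds x) := by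
      have h1 : Tendsto (fun T : ℝ => t/T) atTop (nhds 0) :=
        tendsto_const_nhds.div_atTop tendsto_id
      have h2 : Tendsto (fun T : ℝ => (1 - t/T) * x) atTop (nhds ((1 - 0) * x)) :=
        ((tendsto_const_nhds.sub h1).mul tendsto_const_nhds)
      simpa using h2
    have hbu : atTop.IsBoundedUnder (· ≥ ·) (fun T : ℝ => (1 - t/T) * x) :=
      hu.isBoundedUnder_ge
    have hcv : atTop.IsCoboundedUnder (· ≥ ·) v := by
      refine isCoboundedUnder_ge_of_eventually_le atTop (x := 1) ?_
      filter_upwards [eventually_ge_atTop (1:ℝ)] with T hT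
      have hTpos : (0:ℝ) < T := lt_of_lt_of_le one_pos hT
      have h := (hval T hTpos (Classical.arbitrary I) 0 le_rfl).2
      rw [zero_add] at h
      exact le_trans (ciInf_le (hvbdd T hTpos) (Classical.arbitrary I)) h
    calc x = liminf (fun T : ℝ => (1 - t/T) * x) atTop := (hu.liminf_eq).symm
    _ ≤ liminf v atTop := liminf_le_liminf hev hbu hcv
  -- conclude
  have h01 : (0:ℝ) ≤ liminf v atTop := by
    refine le_trans ?_ (key 1 one_pos)
    exact le_ciInf fun m => le_ciInf fun i => (hval 1 one_pos i m m.2).1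
  apply Real.sSup_le _ h01
  rintro y ⟨t, ht, rfl⟩
  exact key t ht
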